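/- arXiv:1701.05841 — 2 statements merged into one kernel-verified Lean document; each statement's English description precedes it below -/
import Mathlib

section
/- Let ∂₁, ∂₂ be derivations on ℝ. Define [∂₁:∂₂] : ℂ → ℂ by [∂₁:∂₂](x+iy) = (∂₁(x) − ∂₂(y)) + i(∂₁(y) + ∂₂(x)) for x, y ∈ ℝ. Then [∂₁:∂₂] is a derivation on ℂ, i.e. it is additive and satisfies the Leibniz rule [∂₁:∂₂](zw) = z·[∂₁:∂₂](w) + w·[∂₁:∂₂](z). -/
open Complex

/-- A derivation on a commutative ring: additive and Leibniz. -/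
def IsDerivation {R : Type*} [CommRing R] (d : R → R) : Prop :=
  (∀ a b : R, d (a + b) = d a + d b) ∧ (∀ a b : R, d (a * b) = a * d b + b * d a)

lemma myDerivSub {d : ℝ → ℝ} (h : IsDerivation d) (a b : ℝ) :
    d (a - b) = d a - d b := by
  obtain ⟨ha, _⟩ := h
  have h0 : d 0 = 0 := by
    have := ha 0 0
    simpa using this
  have hn : d (-b) = - d b := by
    have := ha (-b) b
    simp [h0] at this
    linarith
  rw [sub_eq_add_neg, ha, hn, sub_eq_add_neg]

/-- The map `[∂₁:∂₂]` on `ℂ` built from two maps on `ℝ`. -/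
noncomputable def bracket (d₁ d₂ : ℝ → ℝ) (z : ℂ) : ℂ :=
  (d₁ z.re - d₂ z.im : ℝ) + (d₁ z.im + d₂ z.re : ℝ) * I

theorem stmt5 (d₁ d₂ : ℝ → ℝ) (h₁ : IsDerivation d₁) (h₂ : IsDerivation d₂) :
    IsDerivation (bracket d₁ d₂) := by
  have hs₁ := myDerivSub h₁
  have hs₂ := myDerivSub h₂
  obtain ⟨ha₁, hm₁⟩ := h₁
  obtain ⟨ha₂, hm₂⟩ := h₂
  constructor
  · intro z w
    apply Complex.ext <;>
      simp [bracket, ha₁, ha₂] <;> ring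
  · intro z w
    apply Complex.ext <;>
      simp [bracket, Complex.mul_re, Complex.mul_im, hs₁, hs₂, ha₁, ha₂, hm₁, hm₂] <;> ring
end

section
/- Let (K, D, j, j′, j″, j‴) be a j-field and C ⊆ K a jcl-closed set. Let z ∈ D with j‴(z) ≠ 0. If any one of j(z), j′(z), j″(z) lies in C, then z ∈ C. -/
variable {K : Type*} [Field K]

/-- A `j`-derivation from `K` to itself, relative to `D ⊆ K` and the functions
`j, j′, j″, j‴`. -/
def IsJDerivation (D : Set K) (j j' j'' j''' : K → K) (d : K → K) : Prop :=
  (∀ a b : K, d (a + b) = d a + d b) ∧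
  (∀ a b : K, d (a * b) = a * d b + b * d a) ∧
  (∀ z ∈ D, d (j z) = j' z * d z ∧ d (j' z) = j'' z * d z ∧ d (j'' z) = j''' z * d z)

/-- The `j`-closure: the common kernel of all `j`-derivations vanishing on `C`. -/
def jcl (D : Set K) (j j' j'' j''' : K → K) (C : Set K) : Set K :=
  {a : K | ∀ d : K → K, IsJDerivation D j j' j'' j''' d → (∀ c ∈ C, d c = 0) → d a = 0}

theorem stmt17 [CharZero K] (D : Set K) (j j' j'' j''' : K → K) (C : Set K)
    (hC : jcl D j j' j'' j''' C = C) (z : K) (hz : z ∈ D) (hz3 : j''' z ≠ 0)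
    (h : j z ∈ C ∨ j' z ∈ C ∨ j'' z ∈ C) :
    z ∈ C := by
  rw [← hC]
  intro d hd hdC
  obtain ⟨hadd, _, hder⟩ := hd
  obtain ⟨h1, h2, h3⟩ := hder z hz
  have hd0 : d 0 = 0 := by
    have := hadd 0 0
    simp at this
    exact this
  rcases h with hjc | hjc | hjc
  · have e1 : j' z * d z = 0 := by rw [← h1]; exact hdC _ hjc
    rcases mul_eq_zero.mp e1 with hj1 | hdz
    · have e2 : j'' z * d z = 0 := by rw [← h2, hj1, hd0]
      rcases mul_eq_zero.mp e2 with hj2 | hdz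
      · have e3 : j''' z * d z = 0 := by rw [← h3, hj2, hd0]
        rcases mul_eq_zero.mp e3 with hj3 | hdz
        · exact absurd hj3 hz3
        · exact hdz
      · exact hdz
    · exact hdz
  · have e2 : j'' z * d z = 0 := by rw [← h2]; exact hdC _ hjc
    rcases mul_eq_zero.mp e2 with hj2 | hdz
    · have e3 : j''' z * d z = 0 := by rw [← h3, hj2, hd0]
      rcases mul_eq_zero.mp e3 with hj3 | hdz
      · exact absurd hj3 hz3
      · exact hdz
    · exact hdz
  · have e3 : j''' z * d z = 0 := by rw [← h3]; exact hdC _ hjc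
    rcases mul_eq_zero.mp e3 with hj3 | hdz
    · exact absurd hj3 hz3
    · exact hdz
end
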